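/- For every positive integer n, ∑_{k=1}^{n} (H_k)^2/k + ∑_{k=1}^{n} H_k^{(2)}/k = (1/3)(H_n)^3 + H_n H_n^{(2)} + (2/3) H_n^{(3)}. -/

import Mathlib

theorem adamchik_identity_three (n : ℕ) (hn : 0 < n) :
    (∑ k ∈ Finset.Icc 1 n, (∑ j ∈ Finset.Icc 1 k, (1 : ℝ) / j) ^ 2 / k)
      + ∑ k ∈ Finset.Icc 1 n, (∑ j ∈ Finset.Icc 1 k, (1 : ℝ) / (j : ℝ) ^ 2) / k
      = (1 / 3) * (∑ j ∈ Finset.Icc 1 n, (1 : ℝ) / j) ^ 3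
        + (∑ j ∈ Finset.Icc 1 n, (1 : ℝ) / j)
            * (∑ j ∈ Finset.Icc 1 n, (1 : ℝ) / (j : ℝ) ^ 2)
        + (2 / 3) * ∑ j ∈ Finset.Icc 1 n, (1 : ℝ) / (j : ℝ) ^ 3 := by
  clear hn
  induction n with
  | zero => simp
  | succ n ih =>
    have h1 : (1 : ℕ) ≤ n + 1 := Nat.le_add_left 1 n
    rw [Finset.sum_Icc_succ_top h1, Finset.sum_Icc_succ_top h1,
      Finset.sum_Icc_succ_top h1, Finset.sum_Icc_succ_top h1,
      Finset.sum_Icc_succ_top h1]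
    set A := ∑ j ∈ Finset.Icc 1 n, (1 : ℝ) / j with hA
    set B := ∑ j ∈ Finset.Icc 1 n, (1 : ℝ) / (j : ℝ) ^ 2 with hB
    have hy : ((n : ℝ) + 1) ≠ 0 := by positivity
    push_cast
    field_simp
    linear_combination (3*((n:ℝ)+1)^3) * ih
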